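/- Let Q ∈ ℂ^{2n×2n} be Hamiltonian, let λ ∈ ℂ, and let x, y ∈ ℂ^{2n} satisfy Q x = λ x, Q^H y = conj(λ) · y, and y^H x ≠ 0. If the rank-one matrix y x^H is Hamiltonian, then λ is purely imaginary, i.e. Re λ = 0. -/
import Mathlib


open Matrix

noncomputable def frobNorm {m k : Type*} [Fintype m] [Fintype k] (M : Matrix m k ℂ) : ℝ :=
  Real.sqrt (∑ i, ∑ j, ‖M i j‖ ^ 2)

noncomputable def Jmat (n : ℕ) : Matrix (Fin n ⊕ Fin n) (Fin n ⊕ Fin n) ℂ :=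
  Matrix.fromBlocks 0 1 (-1) 0

def IsHamiltonian {n : ℕ} (Q : Matrix (Fin n ⊕ Fin n) (Fin n ⊕ Fin n) ℂ) : Prop :=
  Q * Jmat n = (Q * Jmat n)ᴴ

/-- The projection of a matrix onto the set of Hamiltonian matrices. -/
noncomputable def hamProj {n : ℕ} (M : Matrix (Fin n ⊕ Fin n) (Fin n ⊕ Fin n) ℂ) :
    Matrix (Fin n ⊕ Fin n) (Fin n ⊕ Fin n) ℂ :=
  (1 / 2 : ℂ) • (M + Jmat n * Mᴴ * Jmat n)

lemma Jmat_conjTranspose (n : ℕ) : (Jmat n)ᴴ = -(Jmat n) := by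
  simp [Jmat, fromBlocks_conjTranspose, fromBlocks_neg]

lemma Jmat_mul_Jmat (n : ℕ) : Jmat n * Jmat n = -1 := by
  simp [Jmat, fromBlocks_multiply, fromBlocks_neg, ← fromBlocks_one]

lemma vecMulVec_mulVec' {n : ℕ} (w v u : Fin n ⊕ Fin n → ℂ) :
    vecMulVec w v *ᵥ u = (v ⬝ᵥ u) • w := by
  ext i
  simp only [vecMulVec_apply, mulVec, dotProduct, Pi.smul_apply, smul_eq_mul,
    Finset.sum_mul, mul_assoc]
  exact Finset.sum_congr rfl fun j _ => by ring

lemma vecMulVec_conjTranspose' {n : ℕ} (w v : Fin n ⊕ Fin n → ℂ) :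
    (vecMulVec w (star v))ᴴ = vecMulVec v (star w) := by
  ext i j
  simp [vecMulVec_apply, conjTranspose_apply, mul_comm]

/-- If `Q` is Hamiltonian with right eigenvector `x` and left eigenvector `y` for `λ`,
`yᴴ x ≠ 0`, and the rank-one matrix `y xᴴ` is Hamiltonian, then `λ` is purely imaginary. -/
theorem hamiltonian_rankOne_implies_imaginary (n : ℕ)
    (Q : Matrix (Fin n ⊕ Fin n) (Fin n ⊕ Fin n) ℂ) (hQ : IsHamiltonian Q)
    (lam : ℂ) (x y : Fin n ⊕ Fin n → ℂ)
    (hxe : Q *ᵥ x = lam • x)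
    (hye : Qᴴ *ᵥ y = (starRingEnd ℂ) lam • y)
    (hyx : star y ⬝ᵥ x ≠ 0)
    (hH : IsHamiltonian (Matrix.vecMulVec y (star x))) :
    lam.re = 0 := by
  set J := Jmat n with hJ
  set u := J *ᵥ x with hu
  -- Qᴴ * J = -(J * Q)
  have hQJ : Q * J = -(J * Qᴴ) := by
    rw [hQ, conjTranspose_mul, Jmat_conjTranspose, neg_mul]
  have hQH : Qᴴ = J * Q * J := by
    have e1 : J * (Q * J) = J * -(J * Qᴴ) := by rw [hQJ]
    have e2 : J * -(J * Qᴴ) = Qᴴ := by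
      rw [mul_neg, ← mul_assoc, Jmat_mul_Jmat]; simp
    rw [e2] at e1
    rw [← e1, ← mul_assoc]
  have hQHJ : Qᴴ * J = -(J * Q) := by
    rw [hQH, mul_assoc (J * Q), Jmat_mul_Jmat, mul_neg_one]
  -- u is a right eigenvector of Qᴴ for -lam
  have h1 : Qᴴ *ᵥ u = (-lam) • u := by
    rw [hu, mulVec_mulVec, hQHJ, neg_mulVec, ← mulVec_mulVec, hxe, mulVec_smul,
      neg_smul]
  -- from hH: (star y ⬝ᵥ x) • u = -((star x ⬝ᵥ u) • y)
  have hkey : (star y ⬝ᵥ x) • u = -((star x ⬝ᵥ u) • y) := by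
    have h := congrArg (fun M => M *ᵥ x) hH
    simp only [IsHamiltonian, conjTranspose_mul, Jmat_conjTranspose,
      vecMulVec_conjTranspose'] at h
    rw [← hJ] at h
    simp only [neg_mul, neg_mulVec, ← mulVec_mulVec, vecMulVec_mulVec', ← hu,
      mulVec_smul] at h
    rw [h, neg_neg]
  -- hence u is also an eigenvector of Qᴴ for conj lam
  have h2 : Qᴴ *ᵥ u = (starRingEnd ℂ) lam • u := by
    have h := congrArg (fun v => Qᴴ *ᵥ v) hkey
    simp only [mulVec_smul, mulVec_neg, hye, h1] at h
    have hr : -((star x ⬝ᵥ u) • (starRingEnd ℂ) lam • y) =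
        (star y ⬝ᵥ x) • ((starRingEnd ℂ) lam • u) := by
      rw [smul_comm (star x ⬝ᵥ u), ← smul_neg, ← hkey, smul_comm]
    rw [hr] at h
    have h4 := smul_right_injective (Fin n ⊕ Fin n → ℂ) hyx h
    rw [h1, h4]
  -- u ≠ 0
  have hune : u ≠ 0 := by
    intro h0
    have hx : x = 0 := by
      have : J *ᵥ u = (J * J) *ᵥ x := by rw [hu, mulVec_mulVec]
      rw [h0, mulVec_zero, Jmat_mul_Jmat, neg_mulVec, one_mulVec] at this
      exact (neg_eq_zero.mp this.symm)
    apply hyx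
    rw [hx, dotProduct_zero]
  -- conclude
  have h3 : ((-lam) - (starRingEnd ℂ) lam) • u = 0 := by
    rw [sub_smul, ← h1, ← h2, sub_self]
  have h4 : (-lam) - (starRingEnd ℂ) lam = 0 := by
    by_contra hne
    exact hune (by simpa [hne] using smul_eq_zero.mp h3)
  have := congrArg Complex.re h4
  simp [Complex.sub_re, Complex.neg_re, Complex.conj_re] at this
  linarith
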